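/- Let m be the least natural number with e(m) = 0 and set γ_j = Σ_{k=0}^{m−1} β_{i_{e(k)}, e(k)} ∈ ℝ^n. Then for every 1 ≤ l ≤ r, the pairing ⟨γ_j, λ_{lq}⟩ (the sum of the first lq coordinates of γ_j) equals 1 if 1 ≤ l ≤ j, and equals 0 if j+1 ≤ l ≤ r. -/

import Mathlib

/-- Let `m` be the least natural number with `e(m) = 0` and set
`γ_j = Σ_{k=0}^{m−1} β_{i_{e(k)}, e(k)} ∈ ℝ^n`, where `β_{i,j} = e_i − e_{jq+1}`.
Then for every `1 ≤ l ≤ r`, the pairing `⟨γ_j, λ_{lq}⟩` (the sum of the first `lq`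
coordinates of `γ_j`) equals `1` if `1 ≤ l ≤ j`, and `0` if `j+1 ≤ l ≤ r`.
Here `n = rq+1` with `r ≥ 1`, `q ≥ 2`; `i_1,…,i_r` are fixed with `i_j ∈ C_j`
(`C_j = {1,…,jq+1} \ {pq+1 : 1 ≤ p ≤ j}`); `d(i) = ⌈i/q⌉`; `1 ≤ j ≤ r`; and
`e : ℕ → ℕ` satisfies `e(0) = j`, `e(k+1) = d(i_{e(k)}) − 1` if `e(k) ≥ 1`,
`e(k+1) = 0` if `e(k) = 0`. -/
theorem stmt_10 (r q : ℕ) (hr : 1 ≤ r) (hq : 2 ≤ q) (n : ℕ) (hn : n = r * q + 1)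
    (i : ℕ → ℕ)
    (hi : ∀ j, 1 ≤ j → j ≤ r →
      1 ≤ i j ∧ i j ≤ j * q + 1 ∧ ∀ p, 1 ≤ p → p ≤ j → i j ≠ p * q + 1)
    (d : ℕ → ℕ) (hd : ∀ m, (d m : ℤ) = ⌈(m : ℚ) / (q : ℚ)⌉)
    (j : ℕ) (hj1 : 1 ≤ j) (hjr : j ≤ r)
    (e : ℕ → ℕ) (he0 : e 0 = j)
    (heS : ∀ k, e (k + 1) = if 1 ≤ e k then d (i (e k)) - 1 else 0)
    (m : ℕ) (hm0 : e m = 0) (hmleast : ∀ k, k < m → e k ≠ 0) :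
    ∀ l, 1 ≤ l → l ≤ r →
      (∑ k ∈ Finset.range m, ∑ t ∈ Finset.Icc 1 (l * q),
          ((if t = i (e k) then (1 : ℝ) else 0) - (if t = (e k) * q + 1 then (1 : ℝ) else 0)))
        = if l ≤ j then 1 else 0 := by
  have hq0 : 0 < q := by omega
  have hq' : (0 : ℚ) < q := by exact_mod_cast hq0
  -- d a ≤ l ↔ a ≤ l * q
  have hdle : ∀ a l : ℕ, d a ≤ l ↔ a ≤ l * q := by
    intro a l
    have h1 : ((d a : ℤ) ≤ (l : ℤ)) ↔ ((a : ℚ) / q ≤ ((l : ℤ) : ℚ)) := by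
      rw [hd a]; exact Int.ceil_le
    rw [div_le_iff₀ hq'] at h1
    constructor
    · intro h2
      have h3 : (d a : ℤ) ≤ (l : ℤ) := by exact_mod_cast h2
      have h4 := h1.mp h3
      have h5 : (a : ℚ) ≤ ((l * q : ℕ) : ℚ) := by push_cast at h4 ⊢; linarith
      exact_mod_cast h5
    · intro h2
      have h4 : (a : ℚ) ≤ ((l : ℤ) : ℚ) * q := by
        push_cast
        exact_mod_cast h2
      exact_mod_cast h1.mpr h4
  -- s * q + 1 ≤ t * q ↔ s < t
  have hsl : ∀ s t : ℕ, s * q + 1 ≤ t * q ↔ s < t := by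
    intro s t
    constructor
    · intro h
      by_contra h'
      push_neg at h'
      have h2 := Nat.mul_le_mul h' (le_refl q)
      linarith
    · intro h
      have h2 := Nat.mul_le_mul (Nat.succ_le_of_lt h) (le_refl q)
      rw [Nat.succ_mul] at h2
      linarith
  -- step: for 1 ≤ s ≤ r, 1 ≤ d (i s) ≤ s
  have hstep : ∀ s, 1 ≤ s → s ≤ r → 1 ≤ d (i s) ∧ d (i s) ≤ s := by
    intro s hs1 hs2
    obtain ⟨h1, h2, h3⟩ := hi s hs1 hs2
    have hne := h3 s hs1 le_rfl
    have hle : i s ≤ s * q := by omega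
    constructor
    · have h4 := hdle (i s) 0
      omega
    · exact (hdle (i s) s).mpr hle
  -- e k ≤ j for all k
  have hbound : ∀ k, e k ≤ j := by
    intro k
    induction k with
    | zero => omega
    | succ k ih =>
      rw [heS k]
      by_cases h : 1 ≤ e k
      · rw [if_pos h]
        have := (hstep (e k) h (ih.trans hjr)).2
        omega
      · rw [if_neg h]; omega
  intro l hl1 hlr
  have hsum : ∀ k ∈ Finset.range m,
      (∑ t ∈ Finset.Icc 1 (l * q),
          ((if t = i (e k) then (1 : ℝ) else 0) - (if t = (e k) * q + 1 then (1 : ℝ) else 0)))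
        = (if e (k + 1) < l then (1 : ℝ) else 0) - (if e k < l then (1 : ℝ) else 0) := by
    intro k hk
    rw [Finset.mem_range] at hk
    have hek1 : 1 ≤ e k := Nat.one_le_iff_ne_zero.mpr (hmleast k hk)
    have hekr : e k ≤ r := (hbound k).trans hjr
    obtain ⟨hi1, hi2, _⟩ := hi (e k) hek1 hekr
    have hs := hstep (e k) hek1 hekr
    have heq : e (k + 1) = d (i (e k)) - 1 := by rw [heS k, if_pos hek1]
    have hm1 : i (e k) ∈ Finset.Icc 1 (l * q) ↔ e (k + 1) < l := by
      rw [Finset.mem_Icc, heq]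
      constructor
      · rintro ⟨_, h⟩
        have := (hdle (i (e k)) l).mpr h
        omega
      · intro h
        refine ⟨hi1, (hdle (i (e k)) l).mp ?_⟩
        omega
    have hm2 : e k * q + 1 ∈ Finset.Icc 1 (l * q) ↔ e k < l := by
      rw [Finset.mem_Icc]
      constructor
      · rintro ⟨_, h⟩
        exact (hsl _ _).mp h
      · intro h
        exact ⟨by omega, (hsl _ _).mpr h⟩
    rw [Finset.sum_sub_distrib, Finset.sum_ite_eq', Finset.sum_ite_eq']
    simp only [hm1, hm2]
  rw [Finset.sum_congr rfl hsum,
    Finset.sum_range_sub (fun k => if e k < l then (1 : ℝ) else 0), hm0, he0]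
  by_cases h : l ≤ j
  · rw [if_pos (by omega : 0 < l), if_neg (by omega : ¬ j < l), if_pos h]
    norm_num
  · rw [if_pos (by omega : 0 < l), if_pos (by omega : j < l), if_neg h]
    norm_num
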